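/- For any polynomial functor p, the polynomial ⟨p|p⟩ := Σ_{i∈p(1)} y^{p(p[i])} carries a natural comonoid structure for the composition monoidal structure (y, ◁) on polynomial functors, with counit and comultiplication induced by the coclosure adjunction Poly(p, p' ◁ q) ≅ Poly(⟨p|q⟩, p'). -/

import Mathlib

universe u

/-- A comonoid structure on a polynomial functor `c` for the composition monoidal
structure `(y, ◁)`, presented as a comonad structure on the underlying
endofunctor (counit `c → y` and comultiplication `c → c ◁ c` as natural
transformations, satisfying counitality and coassociativity). -/
structure PolyComonoid (c : PFunctor.{u, u}) where
  ε : ∀ X : Type u, c.Obj X → X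
  δ : ∀ X : Type u, c.Obj X → c.Obj (c.Obj X)
  ε_natural : ∀ {X Y : Type u} (f : X → Y) (x : c.Obj X), f (ε X x) = ε Y (c.map f x)
  δ_natural : ∀ {X Y : Type u} (f : X → Y) (x : c.Obj X),
    c.map (c.map f) (δ X x) = δ Y (c.map f x)
  counit_outer : ∀ (X : Type u) (x : c.Obj X), ε (c.Obj X) (δ X x) = x
  counit_inner : ∀ (X : Type u) (x : c.Obj X), c.map (ε X) (δ X x) = x
  coassoc : ∀ (X : Type u) (x : c.Obj X), c.map (δ X) (δ X x) = δ (c.Obj X) (δ X x)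

/-- The coclosure `⟨p|q⟩ := Σ_{i ∈ p(1)} y^{q(p[i])}`. -/
def coclos (p q : PFunctor.{u, u}) : PFunctor.{u, u} :=
  ⟨p.A, fun i => q.Obj (p.B i)⟩

/-- for any polynomial functor `p`, the coclosure `⟨p|p⟩` carries a
natural comonoid structure for `(y, ◁)`, whose counit and comultiplication are
the ones induced by the coclosure adjunction (counit given by evaluating at the
identity direction, comultiplication by composing directions). -/
theorem coclos_self_comonoid (p : PFunctor.{u, u}) :
    ∃ M : PolyComonoid (coclos p p),
      (∀ (X : Type u) (x : (coclos p p).Obj X),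
        M.ε X x = x.2 ⟨x.1, fun d => d⟩) ∧
      (∀ (X : Type u) (x : (coclos p p).Obj X),
        M.δ X x = ⟨x.1, fun jm => ⟨jm.1, fun ln => x.2 ⟨ln.1, jm.2 ∘ ln.2⟩⟩⟩) := by
  refine ⟨{
    ε := fun X x => x.2 ⟨x.1, fun d => d⟩
    δ := fun X x => ⟨x.1, fun jm => ⟨jm.1, fun ln => x.2 ⟨ln.1, jm.2 ∘ ln.2⟩⟩⟩
    ε_natural := fun f x => rfl
    δ_natural := fun f x => rfl
    counit_outer := fun X x => rfl
    counit_inner := fun X x => rfl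
    coassoc := fun X x => rfl }, fun X x => rfl, fun X x => rfl⟩
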